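/- In the product geometric crystal, ε₀ satisfies the scaling law inductively: if ε₀(e₀^c(x′)) = c^{−1} ε₀(x′) and φ₀(e₀^c(x′)) = c φ₀(x′) hold for x′ = (x₁,…,x_{k−1}), and the same laws hold on the k-th factor, then with the product formulas c₁ = (cφ₀(x′)+ε₀(x_k))/(φ₀(x′)+ε₀(x_k)), c₂ = c/c₁, one has ε₀(e₀^{c₁}(x′), e₀^{c₂}(x_k)) = c^{−1} (ε₀(x′) + ε₀(x′)ε₀(x_k)/φ₀(x′)). -/

import Mathlib

lemma key16 (c1 c eA eB pA : ℂ) (hc1 : c1 ≠ 0) (hc : c ≠ 0) (hp : pA ≠ 0)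
    (h : c1 * (pA + eB) = c * pA + eB) :
    c1⁻¹ * eA + c1⁻¹ * eA * ((c / c1)⁻¹ * eB) / (c1 * pA)
      = c⁻¹ * (eA + eA * eB / pA) := by
  field_simp
  linear_combination (-eA) * h

/-- Inductive scaling law for `ε₀` on a product: from the single-factor laws
`ε₀(e₀^c x′) = c⁻¹ ε₀(x′)`, `φ₀(e₀^c x′) = c φ₀(x′)` and
`ε₀(e₀^c x_k) = c⁻¹ ε₀(x_k)`, with `c₁ = (c φ₀(x′)+ε₀(x_k))/(φ₀(x′)+ε₀(x_k))`
and `c₂ = c/c₁`, one gets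
`ε₀(e₀^{c₁} x′, e₀^{c₂} x_k) = c⁻¹ (ε₀(x′) + ε₀(x′)ε₀(x_k)/φ₀(x′))`. -/
theorem stmt16 {A B : Type*} (eA : ℂ → A → A) (eB : ℂ → B → B)
    (epsA phiA : A → ℂ) (epsB : B → ℂ)
    (hAeps : ∀ c : ℂ, c ≠ 0 → ∀ x, epsA (eA c x) = c⁻¹ * epsA x)
    (hAphi : ∀ c : ℂ, c ≠ 0 → ∀ x, phiA (eA c x) = c * phiA x)
    (hBeps : ∀ c : ℂ, c ≠ 0 → ∀ y, epsB (eB c y) = c⁻¹ * epsB y)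
    (c : ℂ) (hc : c ≠ 0) (x' : A) (xk : B)
    (hphi : phiA x' ≠ 0)
    (hden : phiA x' + epsB xk ≠ 0)
    (hnum : c * phiA x' + epsB xk ≠ 0) :
    epsA (eA ((c * phiA x' + epsB xk) / (phiA x' + epsB xk)) x')
      + epsA (eA ((c * phiA x' + epsB xk) / (phiA x' + epsB xk)) x')
        * epsB (eB (c / ((c * phiA x' + epsB xk) / (phiA x' + epsB xk))) xk)
        / phiA (eA ((c * phiA x' + epsB xk) / (phiA x' + epsB xk)) x')
    = c⁻¹ * (epsA x' + epsA x' * epsB xk / phiA x') := by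
  have hc1 : (c * phiA x' + epsB xk) / (phiA x' + epsB xk) ≠ 0 := div_ne_zero hnum hden
  have hc2 : c / ((c * phiA x' + epsB xk) / (phiA x' + epsB xk)) ≠ 0 := div_ne_zero hc hc1
  rw [hAeps _ hc1, hAphi _ hc1, hBeps _ hc2]
  exact key16 _ _ _ _ _ hc1 hc hphi (div_mul_cancel₀ _ hden)
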